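/- Let u, v : [0,1] → ℝ² be continuous and let W, F : [0,1] → M₂(ℝ) be continuous with W(x) and F(x) symmetric positive semidefinite for every x ∈ [0,1]. Define a₁ = 2·[ (∫₀¹ uᵀWv)² − (∫₀¹ uᵀWu)·(∫₀¹ vᵀWv) ], a₃ = 2·[ (∫₀¹ uᵀFv)² − (∫₀¹ uᵀFu)·(∫₀¹ vᵀFv) ], and a₂ = 2·(∫₀¹ uᵀWv)·(∫₀¹ uᵀFv) − (∫₀¹ vᵀWv)·(∫₀¹ uᵀFu) − (∫₀¹ uᵀWu)·(∫₀¹ vᵀFv). Then a₂² − a₁·a₃ ≥ 0. -/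

import Mathlib

open Matrix

private lemma alg_key (P Q R p q r : ℝ) (hQ : 0 ≤ Q) (hR : 0 ≤ R) (hq : 0 ≤ q) (hr : 0 ≤ r)
    (hW : P^2 ≤ Q*R) (hF : p^2 ≤ q*r) :
    (2*P*p - R*q - Q*r)^2 ≥ 4*(Q*R - P^2)*(q*r - p^2) := by
  set e := Real.sqrt (Q*R) with hedef
  set f := Real.sqrt (q*r) with hfdef
  have he : e^2 = Q*R := Real.sq_sqrt (mul_nonneg hQ hR)
  have hf : f^2 = q*r := Real.sq_sqrt (mul_nonneg hq hr)
  have he0 : 0 ≤ e := Real.sqrt_nonneg _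
  have hf0 : 0 ≤ f := Real.sqrt_nonneg _
  have hPe : |P| ≤ e := by rw [← Real.sqrt_sq_eq_abs]; exact Real.sqrt_le_sqrt hW
  have hpf : |p| ≤ f := by rw [← Real.sqrt_sq_eq_abs]; exact Real.sqrt_le_sqrt hF
  have hPp : P*p ≤ e*f := by
    calc P*p ≤ |P * p| := le_abs_self _
    _ = |P| * |p| := abs_mul _ _
    _ ≤ e*f := mul_le_mul hPe hpf (abs_nonneg _) he0
  have hst : 2*(e*f) ≤ Q*r + R*q := by
    nlinarith [sq_nonneg (Q*r - R*q), mul_nonneg hQ hr, mul_nonneg hR hq,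
      mul_nonneg he0 hf0, sq_nonneg (Q*r + R*q - 2*(e*f))]
  rcases le_or_gt (P*p) 0 with h|h
  · nlinarith [sq_nonneg (Q*r - R*q), mul_nonneg (mul_nonneg hQ hR) (sq_nonneg p),
      mul_nonneg (sq_nonneg P) (mul_nonneg hq hr),
      mul_nonneg (neg_nonneg.2 h) (add_nonneg (mul_nonneg hQ hr) (mul_nonneg hR hq))]
  · have hu : 0 ≤ Q*r + R*q - 2*(e*f) := by linarith
    have hw : 0 ≤ Q*r + R*q + 2*(e*f) - 4*(P*p) := by linarith
    nlinarith [sq_nonneg (e*p - P*f), mul_nonneg hu hw, he, hf,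
      mul_nonneg h.le (sub_nonneg.2 hPp)]

private lemma contOn_form (a b : ℝ → Fin 2 → ℝ) (W : ℝ → Matrix (Fin 2) (Fin 2) ℝ)
    (ha : ContinuousOn a (Set.Icc 0 1)) (hb : ContinuousOn b (Set.Icc 0 1))
    (hW : ContinuousOn W (Set.Icc 0 1)) :
    ContinuousOn (fun x => a x ⬝ᵥ (W x).mulVec (b x)) (Set.Icc 0 1) := by
  have hai : ∀ i : Fin 2, ContinuousOn (fun x => a x i) (Set.Icc 0 1) :=
    fun i => (continuous_apply i).comp_continuousOn ha
  have hbi : ∀ i : Fin 2, ContinuousOn (fun x => b x i) (Set.Icc 0 1) :=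
    fun i => (continuous_apply i).comp_continuousOn hb
  have hWij : ∀ i j : Fin 2, ContinuousOn (fun x => W x i j) (Set.Icc 0 1) :=
    fun i j => by
      have h := ((continuous_apply j).comp (continuous_apply i)).comp_continuousOn hW
      exact h
  simp only [dotProduct, Matrix.mulVec, Fin.sum_univ_two]
  exact ((hai 0).mul (((hWij 0 0).mul (hbi 0)).add ((hWij 0 1).mul (hbi 1)))).add
    ((hai 1).mul (((hWij 1 0).mul (hbi 0)).add ((hWij 1 1).mul (hbi 1))))

private lemma cs_int (u v : ℝ → Fin 2 → ℝ) (W : ℝ → Matrix (Fin 2) (Fin 2) ℝ)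
    (hu : ContinuousOn u (Set.Icc 0 1)) (hv : ContinuousOn v (Set.Icc 0 1))
    (hW : ContinuousOn W (Set.Icc 0 1))
    (hWpsd : ∀ x ∈ Set.Icc (0 : ℝ) 1, (W x).PosSemidef) :
    0 ≤ (∫ x in (0 : ℝ)..1, u x ⬝ᵥ (W x).mulVec (u x)) ∧
    0 ≤ (∫ x in (0 : ℝ)..1, v x ⬝ᵥ (W x).mulVec (v x)) ∧
    (∫ x in (0 : ℝ)..1, u x ⬝ᵥ (W x).mulVec (v x)) ^ 2 ≤
      (∫ x in (0 : ℝ)..1, u x ⬝ᵥ (W x).mulVec (u x)) *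
      (∫ x in (0 : ℝ)..1, v x ⬝ᵥ (W x).mulVec (v x)) := by
  have hptwise : ∀ (w : ℝ → Fin 2 → ℝ), ∀ x ∈ Set.Icc (0:ℝ) 1,
      0 ≤ w x ⬝ᵥ (W x).mulVec (w x) := by
    intro w x hx
    have := (hWpsd x hx).dotProduct_mulVec_nonneg (w x)
    simpa using this
  have hint : ∀ (a b : ℝ → Fin 2 → ℝ), ContinuousOn a (Set.Icc 0 1) →
      ContinuousOn b (Set.Icc 0 1) →
      IntervalIntegrable (fun x => a x ⬝ᵥ (W x).mulVec (b x)) MeasureTheory.volume 0 1 :=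
    fun a b ha hb => (contOn_form a b W ha hb hW).intervalIntegrable_of_Icc zero_le_one
  have huu := hint u u hu hu
  have huv := hint u v hu hv
  have hvv := hint v v hv hv
  have hQ : 0 ≤ (∫ x in (0 : ℝ)..1, u x ⬝ᵥ (W x).mulVec (u x)) :=
    intervalIntegral.integral_nonneg zero_le_one (hptwise u)
  have hR : 0 ≤ (∫ x in (0 : ℝ)..1, v x ⬝ᵥ (W x).mulVec (v x)) :=
    intervalIntegral.integral_nonneg zero_le_one (hptwise v)
  refine ⟨hQ, hR, ?_⟩
  -- quadratic in t is nonnegative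
  have hquad : ∀ t : ℝ,
      0 ≤ (∫ x in (0 : ℝ)..1, v x ⬝ᵥ (W x).mulVec (v x)) * (t * t)
        + (2 * ∫ x in (0 : ℝ)..1, u x ⬝ᵥ (W x).mulVec (v x)) * t
        + (∫ x in (0 : ℝ)..1, u x ⬝ᵥ (W x).mulVec (u x)) := by
    intro t
    have hexp : ∀ x ∈ Set.Icc (0:ℝ) 1,
        (u x + t • v x) ⬝ᵥ (W x).mulVec (u x + t • v x)
          = (t * t) * (v x ⬝ᵥ (W x).mulVec (v x))
            + (2 * t) * (u x ⬝ᵥ (W x).mulVec (v x))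
            + u x ⬝ᵥ (W x).mulVec (u x) := by
      intro x hx
      have hsym := (hWpsd x hx).1
      have h10 : W x 1 0 = W x 0 1 := by
        have := congrFun (congrFun hsym 0) 1
        simpa [Matrix.conjTranspose_apply] using this
      simp only [dotProduct, Matrix.mulVec, Fin.sum_univ_two, Pi.add_apply,
        Pi.smul_apply, smul_eq_mul]
      rw [h10]; ring
    have hintq : ∀ x ∈ Set.uIcc (0:ℝ) 1,
        (fun x => (u x + t • v x) ⬝ᵥ (W x).mulVec (u x + t • v x)) x
          = (fun x => (t * t) * (v x ⬝ᵥ (W x).mulVec (v x))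
            + ((2 * t) * (u x ⬝ᵥ (W x).mulVec (v x))
            + u x ⬝ᵥ (W x).mulVec (u x))) x := by
      intro x hx
      rw [Set.uIcc_of_le zero_le_one] at hx
      beta_reduce
      rw [hexp x hx]; ring
    have h0 : 0 ≤ ∫ x in (0:ℝ)..1, (u x + t • v x) ⬝ᵥ (W x).mulVec (u x + t • v x) := by
      apply intervalIntegral.integral_nonneg zero_le_one
      intro x hx
      have := (hWpsd x hx).dotProduct_mulVec_nonneg (u x + t • v x)
      simpa using this
    rw [intervalIntegral.integral_congr hintq] at h0
    rw [intervalIntegral.integral_add ((hvv.const_mul _)) 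
        ((huv.const_mul _).add huu),
      intervalIntegral.integral_add (huv.const_mul _) huu,
      intervalIntegral.integral_const_mul, intervalIntegral.integral_const_mul] at h0
    linarith
  have hd := discrim_le_zero hquad
  rw [discrim] at hd
  nlinarith [hd]

/-- Discriminant inequality `a₂² − a₁a₃ ≥ 0` for the quadratic-form
coefficients built from positive semidefinite weight matrices `W` and `F`. -/
theorem perturbation_discriminant_nonneg
    (u v : ℝ → Fin 2 → ℝ)
    (W F : ℝ → Matrix (Fin 2) (Fin 2) ℝ)
    (hu : ContinuousOn u (Set.Icc 0 1)) (hv : ContinuousOn v (Set.Icc 0 1))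
    (hW : ContinuousOn W (Set.Icc 0 1)) (hF : ContinuousOn F (Set.Icc 0 1))
    (hWpsd : ∀ x ∈ Set.Icc (0 : ℝ) 1, (W x).PosSemidef)
    (hFpsd : ∀ x ∈ Set.Icc (0 : ℝ) 1, (F x).PosSemidef)
    (a₁ a₂ a₃ : ℝ)
    (ha₁ : a₁ = 2 * ((∫ x in (0 : ℝ)..1, u x ⬝ᵥ (W x).mulVec (v x)) ^ 2
      - (∫ x in (0 : ℝ)..1, u x ⬝ᵥ (W x).mulVec (u x))
        * (∫ x in (0 : ℝ)..1, v x ⬝ᵥ (W x).mulVec (v x))))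
    (ha₃ : a₃ = 2 * ((∫ x in (0 : ℝ)..1, u x ⬝ᵥ (F x).mulVec (v x)) ^ 2
      - (∫ x in (0 : ℝ)..1, u x ⬝ᵥ (F x).mulVec (u x))
        * (∫ x in (0 : ℝ)..1, v x ⬝ᵥ (F x).mulVec (v x))))
    (ha₂ : a₂ = 2 * (∫ x in (0 : ℝ)..1, u x ⬝ᵥ (W x).mulVec (v x))
        * (∫ x in (0 : ℝ)..1, u x ⬝ᵥ (F x).mulVec (v x))
      - (∫ x in (0 : ℝ)..1, v x ⬝ᵥ (W x).mulVec (v x))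
        * (∫ x in (0 : ℝ)..1, u x ⬝ᵥ (F x).mulVec (u x))
      - (∫ x in (0 : ℝ)..1, u x ⬝ᵥ (W x).mulVec (u x))
        * (∫ x in (0 : ℝ)..1, v x ⬝ᵥ (F x).mulVec (v x))) :
    a₂ ^ 2 - a₁ * a₃ ≥ 0 := by
  obtain ⟨hQ, hR, hPQR⟩ := cs_int u v W hu hv hW hWpsd
  obtain ⟨hq, hr, hpqr⟩ := cs_int u v F hu hv hF hFpsd
  have key := alg_key (∫ x in (0 : ℝ)..1, u x ⬝ᵥ (W x).mulVec (v x))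
    (∫ x in (0 : ℝ)..1, u x ⬝ᵥ (W x).mulVec (u x))
    (∫ x in (0 : ℝ)..1, v x ⬝ᵥ (W x).mulVec (v x))
    (∫ x in (0 : ℝ)..1, u x ⬝ᵥ (F x).mulVec (v x))
    (∫ x in (0 : ℝ)..1, u x ⬝ᵥ (F x).mulVec (u x))
    (∫ x in (0 : ℝ)..1, v x ⬝ᵥ (F x).mulVec (v x))
    hQ hR hq hr hPQR hpqr
  rw [ha₁, ha₂, ha₃]
  nlinarith [key]
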